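/- The set M = { log(2^k + 8m)/log(2^k) : k ∈ ℕ, k ≥ 2, m ∈ ℕ, 0 ≤ m ≤ 2·4^(k−2) − 2^k + 1 } is dense in the interval [1,2]. -/
import Mathlib


/-- The set M = { log(2^k + 8m)/log(2^k) : k ≥ 2, 0 ≤ m ≤ 2·4^(k−2) − 2^k + 1 }
is dense in [1,2]. -/
theorem stmt2 :
    ∀ x ∈ Set.Icc (1 : ℝ) 2,
      x ∈ closure {y : ℝ | ∃ k m : ℕ, 2 ≤ k ∧
        (m : ℤ) ≤ 2 * 4 ^ (k - 2) - 2 ^ k + 1 ∧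
        y = Real.log ((2 : ℝ) ^ k + 8 * m) / Real.log ((2 : ℝ) ^ k)} := by
  intro x hx
  obtain ⟨hx1, hx2⟩ := hx
  rw [Metric.mem_closure_iff]
  intro ε hε
  obtain ⟨n0, hn0⟩ := pow_unbounded_of_one_lt (16 / ε) (by norm_num : (1:ℝ) < 2)
  set k := max 4 n0 with hkdef
  have hk4 : 4 ≤ k := le_max_left _ _
  have hk2 : 2 ≤ k := by omega
  have h2kpos : (0:ℝ) < 2 ^ k := by positivity
  have h2k16 : (16:ℝ) ≤ 2 ^ k := by
    calc (16:ℝ) = 2 ^ 4 := by norm_num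
    _ ≤ 2 ^ k := pow_le_pow_right₀ (by norm_num) hk4
  have hεk : 16 / (2:ℝ) ^ k < ε := by
    have hpow : (2:ℝ) ^ n0 ≤ (2:ℝ) ^ k := pow_le_pow_right₀ (by norm_num) (le_max_right _ _)
    rw [div_lt_iff₀ h2kpos]
    have h16 : (16:ℝ) = (16 / ε) * ε := by field_simp
    nlinarith
  set L := Real.log 2 with hLdef
  have hLpos : 0 < L := Real.log_pos (by norm_num)
  have hkL1 : 1 ≤ (k:ℝ) * L := by
    have h2 : (0.6931471803:ℝ) < L := Real.log_two_gt_d9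
    have h3 : (4:ℝ) ≤ (k:ℝ) := by exact_mod_cast hk4
    nlinarith
  have hkLpos : 0 < (k:ℝ) * L := by linarith
  have ht : x * ((k:ℝ) * L) = x * ((k:ℝ) * L) := rfl
  set t := x * ((k:ℝ) * L) with htdef
  set c := Real.exp t with hcdef
  have hcpos : 0 < c := Real.exp_pos t
  have hlog2k : Real.log ((2:ℝ) ^ k) = (k:ℝ) * L := by
    rw [Real.log_pow]
  have h2kc : (2:ℝ) ^ k ≤ c := by
    rw [← Real.exp_log h2kpos, hlog2k]
    apply Real.exp_le_exp.mpr
    nlinarith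
  have h4kpos : (0:ℝ) < 4 ^ k := by positivity
  have hc4k : c ≤ (4:ℝ) ^ k := by
    have h44 : Real.log ((4:ℝ) ^ k) = (k:ℝ) * (2 * L) := by
      rw [Real.log_pow, show (4:ℝ) = 2 ^ 2 by norm_num, Real.log_pow]
      push_cast; ring
    rw [← Real.exp_log h4kpos, h44]
    apply Real.exp_le_exp.mpr
    nlinarith
  -- natural number data
  set m0 := ⌊(c - 2 ^ k) / 8⌋₊ with hm0def
  set M := 2 * 4 ^ (k - 2) - 2 ^ k + 1 with hMdef
  have hMle : (2:ℕ) ^ k ≤ 2 * 4 ^ (k - 2) := by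
    have h1 : 2 * 4 ^ (k - 2) = 2 ^ (2 * (k - 2) + 1) := by
      rw [show (4:ℕ) = 2 ^ 2 by norm_num, ← pow_mul, pow_succ]
      ring
    rw [h1]
    exact Nat.pow_le_pow_right (by norm_num) (by omega)
  set m := min m0 M with hmdef
  have hmM : m ≤ M := min_le_right _ _
  have hmm0 : m ≤ m0 := min_le_left _ _
  have hm0le : (m0:ℝ) ≤ (c - 2 ^ k) / 8 := Nat.floor_le (by linarith)
  have hm0gt : (c - 2 ^ k) / 8 < (m0:ℝ) + 1 := Nat.lt_floor_add_one _
  have hMr : (M:ℝ) = 2 * (4:ℝ) ^ (k - 2) - 2 ^ k + 1 := by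
    rw [hMdef, Nat.cast_add, Nat.cast_sub hMle]
    push_cast; ring
  have h4k16 : (4:ℝ) ^ (k - 2) * 16 = 4 ^ k := by
    rw [show (16:ℝ) = 4 ^ 2 by norm_num, ← pow_add]
    congr 1; omega
  have h4k2k : (4:ℝ) ^ k = 2 ^ k * 2 ^ k := by
    rw [show (4:ℝ) = 2 * 2 by norm_num, mul_pow]
  set n : ℝ := 2 ^ k + 8 * m with hndef
  have hmr0 : (0:ℝ) ≤ (m:ℝ) := Nat.cast_nonneg m
  have hn2k : (2:ℝ) ^ k ≤ n := by rw [hndef]; linarith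
  have hnpos : 0 < n := by linarith
  have hnc : n ≤ c := by
    have : (m:ℝ) ≤ (m0:ℝ) := by exact_mod_cast hmm0
    rw [hndef]; linarith
  -- key bound : (c - n) * 2^k ≤ 16 * n
  have hbound : (c - n) * 2 ^ k ≤ 16 * n := by
    by_cases h : m0 ≤ M
    · have hmeq : m = m0 := by rw [hmdef, min_eq_left h]
      have h8 : c - n < 8 := by
        rw [hndef, hmeq]; linarith
      have h1 : (c - n) * 2 ^ k ≤ 8 * 2 ^ k :=
        mul_le_mul_of_nonneg_right (le_of_lt h8) h2kpos.le
      linarith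
    · have hmeq : m = M := by rw [hmdef, min_eq_right (by omega)]
      have hnval : n = (4:ℝ) ^ k - 7 * 2 ^ k + 8 := by
        rw [hndef, hmeq, hMr]
        linarith [h4k16]
      have hcn : c - n ≤ 7 * 2 ^ k - 8 := by
        rw [hnval]; linarith
      have h1 : (c - n) * 2 ^ k ≤ (7 * 2 ^ k - 8) * 2 ^ k :=
        mul_le_mul_of_nonneg_right hcn h2kpos.le
      have h2 : 16 * 2 ^ k ≤ 2 ^ k * (2:ℝ) ^ k :=
        mul_le_mul_of_nonneg_right h2k16 h2kpos.le
      have h3 : (7 * 2 ^ k - 8) * 2 ^ k = 7 * ((2:ℝ) ^ k * 2 ^ k) - 8 * 2 ^ k := by ring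
      linarith [h1, h2, h3, h4k2k, hnval]
  -- log estimates
  have hlogc : Real.log c = t := Real.log_exp t
  have hlogn_le : Real.log n ≤ t := by
    rw [← hlogc]
    exact Real.log_le_log hnpos hnc
  have hdiff : t - Real.log n ≤ 16 / 2 ^ k := by
    have h1 : Real.log c - Real.log n = Real.log (c / n) := (Real.log_div hcpos.ne' hnpos.ne').symm
    have h2 : Real.log (c / n) ≤ c / n - 1 := Real.log_le_sub_one_of_pos (by positivity)
    have h3 : c / n - 1 = (c - n) / n := by field_simp
    have h4 : (c - n) / n ≤ 16 / 2 ^ k := by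
      rw [div_le_div_iff₀ hnpos h2kpos]; linarith
    rw [← hlogc]; linarith
  refine ⟨Real.log n / Real.log ((2:ℝ) ^ k), ⟨k, m, hk2, ?_, by rw [hndef]⟩, ?_⟩
  · have hcast : (m:ℤ) ≤ ((M:ℕ) : ℤ) := by exact_mod_cast hmM
    rw [hMdef, Nat.cast_add, Nat.cast_sub hMle] at hcast
    push_cast at hcast ⊢
    linarith
  · rw [hlog2k]
    have hxy : x - Real.log n / ((k:ℝ) * L) = (t - Real.log n) / ((k:ℝ) * L) := by
      rw [htdef]; field_simp
    have hge : 0 ≤ t - Real.log n := by linarith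
    rw [Real.dist_eq, hxy, abs_of_nonneg (by positivity)]
    calc (t - Real.log n) / ((k:ℝ) * L) ≤ t - Real.log n := by
          apply div_le_self hge hkL1
    _ ≤ 16 / 2 ^ k := hdiff
    _ < ε := hεk
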